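/- Let q be a prime power. For every function F : H_1(F_q) → ℂ one has ‖M^rd F‖_{ℓ^2(D_1)} ≤ 5 · q^{1/2} · ‖F‖_{ℓ^2(H_1(F_q))}. -/

import Mathlib

/-!
`K` plays the role of the finite field `F_q` with `q = Fintype.card K` elements
(the cardinality of a finite field is automatically a prime power).
The Heisenberg group `H₁(F_q)` is identified with `K × K × K`.
The set `D₁` of non-vertical (refined) projective directions
`{[a : b : c] ∈ P²(F_q) : (a,b) ≠ (0,0)}` is identified with `Option K × K`:
`(some m, γ)` corresponds to `[1 : m : γ]` and `(none, γ)` to `[0 : 1 : γ]`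
(every element of `D₁` has a unique such normal form).
-/

noncomputable section

open Finset

/-- The point with parameter `s` of the horizontal line with refined direction
`ω ∈ D₁` indexed by `τ ∈ F_q`.  For `ω = [1 : m : γ]` the `q` horizontal lines
with `Dir L = ω` are `{(x, m x - γ, τ + γ x) : x ∈ F_q}`, `τ ∈ F_q`; for
`ω = [0 : 1 : γ]` they are `{(γ, y, τ + γ y) : y ∈ F_q}`, `τ ∈ F_q`. -/
def lineRd {K : Type*} [Field K] (ω : Option K × K) (τ : K) (s : K) : K × K × K :=
  match ω.1 with
  | some m => (s, m * s - ω.2, τ + ω.2 * s)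
  | none => (ω.2, s, τ + ω.2 * s)

/-- The refined-direction maximal function `M^rd F` on `D₁ ≃ Option K × K`:
the maximum, over the `q` horizontal lines `L` with `Dir L = ω`, of the sum of
`|F|` along `L`. -/
def Mrd {K : Type*} [Field K] [Fintype K] (Fc : K × K × K → ℂ) (ω : Option K × K) : ℝ :=
  Finset.univ.sup' ⟨(0 : K), Finset.mem_univ _⟩
    fun τ => ∑ s : K, ‖Fc (lineRd ω τ s)‖

/-- `ℓ^r` norm of a complex-valued function on a finite set. -/
def lpNormC {X : Type*} [Fintype X] (r : ℝ) (g : X → ℂ) : ℝ :=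
  (∑ x, ‖g x‖ ^ r) ^ (1 / r)

/-- `ℓ^r` norm of a real-valued function on a finite set. -/
def lpNormR {X : Type*} [Fintype X] (r : ℝ) (g : X → ℝ) : ℝ :=
  (∑ x, |g x| ^ r) ^ (1 / r)

section Aux

set_option linter.unusedVariables false
set_option linter.unusedSectionVars false
set_option maxHeartbeats 1000000

variable {K : Type*} [Field K] [Fintype K]

private lemma app3 (H : K × K × K → ℝ) {a b c a' b' c' : K} (h1 : a = a') (h2 : b = b')
    (h3 : c = c') : H (a, b, c) = H (a', b', c') := by rw [h1, h2, h3]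

private lemma sum_shift (f : K → ℝ) (c : K) : ∑ x : K, f (c + x) = ∑ x : K, f x :=
  Fintype.sum_equiv (Equiv.addLeft c) _ _ fun x => rfl

private lemma sum_affine (f : K → ℝ) {α : K} (hα : α ≠ 0) (c : K) :
    ∑ x : K, f (c + x * α) = ∑ x : K, f x :=
  Fintype.sum_equiv ((Equiv.mulRight₀ α hα).trans (Equiv.addLeft c)) _ _ fun x => rfl

private lemma sum_affine_sub (f : K → ℝ) {β : K} (hβ : β ≠ 0) (c : K) :
    ∑ y : K, f (c - y * β) = ∑ y : K, f y :=
  Fintype.sum_equiv ((Equiv.mulRight₀ β hβ).trans (Equiv.subLeft c)) _ _ fun y => rfl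

private lemma sum_xy (f : K → ℝ) (hf : ∑ c : K, f c = 0) {α β : K} (t : K)
    (h : ¬(α = 0 ∧ β = 0)) : ∑ x : K, ∑ y : K, f (t + x * α - y * β) = 0 := by
  by_cases hα : α = 0
  · have hβ : β ≠ 0 := by tauto
    subst hα
    have h1 : ∀ x : K, ∑ y : K, f (t + x * 0 - y * β) = 0 := by
      intro x
      have h2 : ∀ y : K, f (t + x * 0 - y * β) = f (t - y * β) :=
        fun y => congrArg f (by ring)
      rw [Finset.sum_congr rfl fun y _ => h2 y, sum_affine_sub f hβ t, hf]
    rw [Finset.sum_congr rfl fun x _ => h1 x]; simp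
  · rw [Finset.sum_comm]
    have h1 : ∀ y : K, ∑ x : K, f (t + x * α - y * β) = 0 := by
      intro y
      have h2 : ∀ x : K, f (t + x * α - y * β) = f ((t - y * β) + x * α) :=
        fun x => congrArg f (by ring)
      rw [Finset.sum_congr rfl fun x _ => h2 x, sum_affine f hα, hf]
    rw [Finset.sum_congr rfl fun y _ => h1 y]; simp

/-- The horizontal convolution operator `T`. -/
private def Tf (H : K × K × K → ℝ) (p : K × K × K) : ℝ :=
  ∑ u : K, ∑ v : K, H (u, v, p.2.2 + p.1 * v - p.2.1 * u)

/-- For fiber-mean-zero `H`, `‖T H‖² = q² ‖H‖²`. -/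
private lemma Tf_norm (H : K × K × K → ℝ) (hH : ∀ x y : K, ∑ t : K, H (x, y, t) = 0) :
    ∑ p : K × K × K, Tf H p ^ 2 = (Fintype.card K : ℝ) ^ 2 * ∑ p : K × K × K, H p ^ 2 := by
  classical
  set q : ℝ := (Fintype.card K : ℝ)
  have key : ∑ z : K × K × K × K × K × K × K,
        (H (z.2.2.2.1, z.2.2.2.2.2.1, z.2.2.1 + z.1 * z.2.2.2.2.2.1 - z.2.1 * z.2.2.2.1) *
         H (z.2.2.2.2.1, z.2.2.2.2.2.2, z.2.2.1 + z.1 * z.2.2.2.2.2.2 - z.2.1 * z.2.2.2.2.1))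
      = ∑ z : K × K × K × K × K × K × K,
        (H (z.1, z.2.1, z.2.2.2.2.1) *
         H (z.2.2.1, z.2.2.2.1,
            z.2.2.2.2.1 + z.2.2.2.2.2.1 * (z.2.2.2.1 - z.2.1)
              - z.2.2.2.2.2.2 * (z.2.2.1 - z.1))) := by
    refine Fintype.sum_equiv
      ⟨fun z => (z.2.2.2.1, z.2.2.2.2.2.1, z.2.2.2.2.1, z.2.2.2.2.2.2,
                 z.2.2.1 + z.1 * z.2.2.2.2.2.1 - z.2.1 * z.2.2.2.1, z.1, z.2.1),
       fun z => (z.2.2.2.2.2.1, z.2.2.2.2.2.2,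
                 z.2.2.2.2.1 - (z.2.2.2.2.2.1 * z.2.1 - z.2.2.2.2.2.2 * z.1),
                 z.1, z.2.2.1, z.2.1, z.2.2.2.1),
       ?_, ?_⟩ _ _ ?_
    · rintro ⟨x, y, t, u, u', v, v'⟩
      exact Prod.ext (by ring) (Prod.ext (by ring) (Prod.ext (by ring)
        (Prod.ext (by ring) (Prod.ext (by ring) (Prod.ext (by ring) (by ring))))))
    · rintro ⟨u, v, u', v', t, x, y⟩
      exact Prod.ext (by ring) (Prod.ext (by ring) (Prod.ext (by ring)
        (Prod.ext (by ring) (Prod.ext (by ring) (Prod.ext (by ring) (by ring))))))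
    · rintro ⟨x, y, t, u, u', v, v'⟩
      simp only [Equiv.coe_fn_mk]
      exact congrArg₂ (· * ·) rfl (app3 H rfl rfl (by ring))
  have lhs_eq : ∑ p : K × K × K, Tf H p ^ 2
      = ∑ z : K × K × K × K × K × K × K,
        (H (z.2.2.2.1, z.2.2.2.2.2.1, z.2.2.1 + z.1 * z.2.2.2.2.2.1 - z.2.1 * z.2.2.2.1) *
         H (z.2.2.2.2.1, z.2.2.2.2.2.2, z.2.2.1 + z.1 * z.2.2.2.2.2.2 - z.2.1 * z.2.2.2.2.1)) := by
    simp only [Fintype.sum_prod_type]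
    refine Finset.sum_congr rfl fun x _ => Finset.sum_congr rfl fun y _ =>
      Finset.sum_congr rfl fun t _ => ?_
    rw [Tf, sq, Finset.sum_mul_sum]
    refine Finset.sum_congr rfl fun u _ => Finset.sum_congr rfl fun u' _ => ?_
    rw [Finset.sum_mul_sum]
  have rhs_eq : ∑ z : K × K × K × K × K × K × K,
        (H (z.1, z.2.1, z.2.2.2.2.1) *
         H (z.2.2.1, z.2.2.2.1,
            z.2.2.2.2.1 + z.2.2.2.2.2.1 * (z.2.2.2.1 - z.2.1)
              - z.2.2.2.2.2.2 * (z.2.2.1 - z.1)))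
      = q ^ 2 * ∑ p : K × K × K, H p ^ 2 := by
    simp only [Fintype.sum_prod_type]
    have inner : ∀ u v : K, (∑ u' : K, ∑ v' : K, ∑ t : K, ∑ x : K, ∑ y : K,
          H (u, v, t) * H (u', v', t + x * (v' - v) - y * (u' - u)))
        = q ^ 2 * ∑ t : K, H (u, v, t) ^ 2 := by
      intro u v
      have J : ∀ u' v' : K, (∑ t : K, ∑ x : K, ∑ y : K,
            H (u, v, t) * H (u', v', t + x * (v' - v) - y * (u' - u)))
          = if u' = u ∧ v' = v then q ^ 2 * ∑ t : K, H (u, v, t) ^ 2 else 0 := by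
        intro u' v'
        by_cases hc : u' = u ∧ v' = v
        · obtain ⟨hu, hv⟩ := hc; subst hu; subst hv
          simp only [sub_self, mul_zero, add_zero, sub_zero, if_true, and_self]
          rw [Finset.mul_sum]
          refine Finset.sum_congr rfl fun t _ => ?_
          simp [Finset.sum_const, card_univ, sq]
          try ring
        · rw [if_neg hc]
          refine Finset.sum_eq_zero fun t _ => ?_
          have h0 : (∑ x : K, ∑ y : K,
              H (u', v', t + x * (v' - v) - y * (u' - u))) = 0 := by
            refine sum_xy (fun c => H (u', v', c)) (hH u' v') t ?_
            intro ⟨h1, h2⟩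
            exact hc ⟨by rwa [sub_eq_zero] at h2, by rwa [sub_eq_zero] at h1⟩
          calc (∑ x : K, ∑ y : K,
                H (u, v, t) * H (u', v', t + x * (v' - v) - y * (u' - u)))
              = H (u, v, t) * ∑ x : K, ∑ y : K,
                H (u', v', t + x * (v' - v) - y * (u' - u)) := by
                simp only [← Finset.mul_sum]
            _ = 0 := by rw [h0, mul_zero]
      rw [Finset.sum_congr rfl fun u' _ => Finset.sum_congr rfl fun v' _ => J u' v']
      have col : ∀ u' : K, (∑ v' : K, if u' = u ∧ v' = v
            then q ^ 2 * ∑ t : K, H (u, v, t) ^ 2 else 0)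
          = if u' = u then q ^ 2 * ∑ t : K, H (u, v, t) ^ 2 else 0 := by
        intro u'
        by_cases hu : u' = u <;> simp [hu]
      rw [Finset.sum_congr rfl fun u' _ => col u']
      simp
    rw [Finset.sum_congr rfl fun u _ => Finset.sum_congr rfl fun v _ => inner u v]
    simp only [← Finset.mul_sum, Fintype.sum_prod_type]
  rw [lhs_eq, key, rhs_eq]

/-- The operator arising from summing over all lines: `U = q·Id + T`. -/
private def Uf (H : K × K × K → ℝ) (p : K × K × K) : ℝ :=
  (∑ d : K, ∑ m : K, H (p.1 + d, p.2.1 + m * d, p.2.2 + p.1 * (m * d) - p.2.1 * d))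
    + ∑ d : K, H (p.1, p.2.1 + d, p.2.2 + p.1 * d)

private lemma Uf_eq (H : K × K × K → ℝ) (p : K × K × K) :
    Uf H p = (Fintype.card K : ℝ) * H p + Tf H p := by
  classical
  obtain ⟨x, y, t⟩ := p
  set φ : K → ℝ := fun u => ∑ v : K, H (u, v, t + x * v - y * u) with hφ
  have hTf : Tf H (x, y, t) = ∑ u : K, φ u := rfl
  have hF0 : (∑ m : K, H (x + (0:K), y + m * 0, t + x * (m * 0) - y * 0))
      = (Fintype.card K : ℝ) * H (x, y, t) := by
    have : ∀ m : K, H (x + (0:K), y + m * 0, t + x * (m * 0) - y * 0) = H (x, y, t) :=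
      fun m => app3 H (by ring) (by ring) (by ring)
    rw [Finset.sum_congr rfl fun m _ => this m]
    simp [Finset.sum_const, card_univ, nsmul_eq_mul]
  have hFd : ∀ d : K, d ≠ 0 →
      (∑ m : K, H (x + d, y + m * d, t + x * (m * d) - y * d)) = φ (x + d) := by
    intro d hd
    exact Fintype.sum_bijective (fun m : K => y + m * d)
      ((Equiv.mulRight₀ d hd).trans (Equiv.addLeft y)).bijective
      (fun m => H (x + d, y + m * d, t + x * (m * d) - y * d))
      (fun v => H (x + d, v, t + x * v - y * (x + d)))
      (fun m => app3 H rfl rfl (by ring))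
  have hsecond : (∑ d : K, H (x, y + d, t + x * d)) = φ x := by
    exact Fintype.sum_bijective (fun d : K => y + d)
      (Equiv.addLeft y).bijective
      (fun d => H (x, y + d, t + x * d))
      (fun v => H (x, v, t + x * v - y * x))
      (fun d => app3 H rfl rfl (by ring))
  have hsplit : (∑ d : K, ∑ m : K, H (x + d, y + m * d, t + x * (m * d) - y * d))
      = ∑ d ∈ univ \ {(0:K)}, φ (x + d) + (Fintype.card K : ℝ) * H (x, y, t) := by
    rw [Finset.sum_eq_sum_sdiff_singleton_add (Finset.mem_univ (0:K)), hF0]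
    congr 1
    refine Finset.sum_congr rfl fun d hd => ?_
    have hd0 : d ≠ 0 := by simpa using hd
    exact hFd d hd0
  have hsplit2 : (∑ d : K, φ (x + d))
      = ∑ d ∈ univ \ {(0:K)}, φ (x + d) + φ (x + 0) :=
    Finset.sum_eq_sum_sdiff_singleton_add (Finset.mem_univ (0:K)) _
  have hall : (∑ d : K, φ (x + d)) = ∑ u : K, φ u := sum_shift φ x
  rw [Uf, hsplit, hsecond, hTf, ← hall, hsplit2]
  rw [show x + (0:K) = x by ring]
  ring

/-- The master identity: the sum over all lines of the squared line-sums. -/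
private lemma Sline_eq (H : K × K × K → ℝ) :
    (∑ ω : Option K × K, ∑ τ : K, (∑ s : K, H (lineRd ω τ s)) ^ 2)
      = ∑ p : K × K × K, H p * Uf H p := by
  classical
  rw [Fintype.sum_prod_type, Fintype.sum_option]
  have hnone : ∀ γ τ s : K, lineRd ((none : Option K), γ) τ s = (γ, s, τ + γ * s) :=
    fun γ τ s => rfl
  have hsome : ∀ m γ τ s : K, lineRd (some m, γ) τ s = (s, m * s - γ, τ + γ * s) :=
    fun m γ τ s => rfl
  have NP : (∑ γ : K, ∑ τ : K, (∑ s : K, H (lineRd ((none : Option K), γ) τ s)) ^ 2)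
      = ∑ x : K, ∑ y : K, ∑ t : K, ∑ d : K, H (x, y, t) * H (x, y + d, t + x * d) := by
    have expand : (∑ γ : K, ∑ τ : K, (∑ s : K, H (lineRd ((none : Option K), γ) τ s)) ^ 2)
        = ∑ z : K × K × K × K,
            H (z.1, z.2.2.1, z.2.1 + z.1 * z.2.2.1) *
            H (z.1, z.2.2.2, z.2.1 + z.1 * z.2.2.2) := by
      simp only [Fintype.sum_prod_type]
      refine Finset.sum_congr rfl fun γ _ => Finset.sum_congr rfl fun τ _ => ?_
      rw [sq, Finset.sum_mul_sum]
      refine Finset.sum_congr rfl fun s _ => Finset.sum_congr rfl fun s' _ => ?_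
      rw [hnone, hnone]
    rw [expand]
    have reindex : ∑ z : K × K × K × K,
          (H (z.1, z.2.2.1, z.2.1 + z.1 * z.2.2.1) *
           H (z.1, z.2.2.2, z.2.1 + z.1 * z.2.2.2))
        = ∑ z : K × K × K × K,
          (H (z.1, z.2.1, z.2.2.1) *
           H (z.1, z.2.1 + z.2.2.2, z.2.2.1 + z.1 * z.2.2.2)) := by
      refine Fintype.sum_equiv
        ⟨fun z => (z.1, z.2.2.1, z.2.1 + z.1 * z.2.2.1, z.2.2.2 - z.2.2.1),
         fun z => (z.1, z.2.2.1 - z.1 * z.2.1, z.2.1, z.2.1 + z.2.2.2),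
         ?_, ?_⟩ _ _ ?_
      · rintro ⟨γ, τ, s, s'⟩
        exact Prod.ext (by ring) (Prod.ext (by ring) (Prod.ext (by ring) (by ring)))
      · rintro ⟨x, y, t, d⟩
        exact Prod.ext (by ring) (Prod.ext (by ring) (Prod.ext (by ring) (by ring)))
      · rintro ⟨γ, τ, s, s'⟩
        simp only [Equiv.coe_fn_mk]
        exact congrArg₂ (· * ·) rfl (app3 H rfl (by ring) (by ring))
    rw [reindex]
    simp only [Fintype.sum_prod_type]
  have SP : (∑ m : K, ∑ γ : K, ∑ τ : K, (∑ s : K, H (lineRd (some m, γ) τ s)) ^ 2)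
      = ∑ x : K, ∑ y : K, ∑ t : K, ∑ d : K, ∑ m : K,
          H (x, y, t) * H (x + d, y + m * d, t + x * (m * d) - y * d) := by
    have expand : (∑ m : K, ∑ γ : K, ∑ τ : K, (∑ s : K, H (lineRd (some m, γ) τ s)) ^ 2)
        = ∑ z : K × K × K × K × K,
            H (z.2.2.2.1, z.1 * z.2.2.2.1 - z.2.1, z.2.2.1 + z.2.1 * z.2.2.2.1) *
            H (z.2.2.2.2, z.1 * z.2.2.2.2 - z.2.1, z.2.2.1 + z.2.1 * z.2.2.2.2) := by
      simp only [Fintype.sum_prod_type]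
      refine Finset.sum_congr rfl fun m _ => Finset.sum_congr rfl fun γ _ =>
        Finset.sum_congr rfl fun τ _ => ?_
      rw [sq, Finset.sum_mul_sum]
      refine Finset.sum_congr rfl fun s _ => Finset.sum_congr rfl fun s' _ => ?_
      rw [hsome, hsome]
    rw [expand]
    have reindex : ∑ z : K × K × K × K × K,
          (H (z.2.2.2.1, z.1 * z.2.2.2.1 - z.2.1, z.2.2.1 + z.2.1 * z.2.2.2.1) *
           H (z.2.2.2.2, z.1 * z.2.2.2.2 - z.2.1, z.2.2.1 + z.2.1 * z.2.2.2.2))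
        = ∑ z : K × K × K × K × K,
          (H (z.1, z.2.1, z.2.2.1) *
           H (z.1 + z.2.2.2.1, z.2.1 + z.2.2.2.2 * z.2.2.2.1,
              z.2.2.1 + z.1 * (z.2.2.2.2 * z.2.2.2.1) - z.2.1 * z.2.2.2.1)) := by
      -- (m, γ, τ, s, s') ↦ (x, y, t, d, m) = (s, m s - γ, τ + γ s, s' - s, m)
      refine Fintype.sum_equiv
        ⟨fun z => (z.2.2.2.1, z.1 * z.2.2.2.1 - z.2.1,
                   z.2.2.1 + z.2.1 * z.2.2.2.1, z.2.2.2.2 - z.2.2.2.1, z.1),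
         fun z => (z.2.2.2.2, z.2.2.2.2 * z.1 - z.2.1,
                   z.2.2.1 - (z.2.2.2.2 * z.1 - z.2.1) * z.1, z.1, z.1 + z.2.2.2.1),
         ?_, ?_⟩ _ _ ?_
      · rintro ⟨m, γ, τ, s, s'⟩
        exact Prod.ext (by ring) (Prod.ext (by ring) (Prod.ext (by ring)
          (Prod.ext (by ring) (by ring))))
      · rintro ⟨x, y, t, d, m⟩
        exact Prod.ext (by ring) (Prod.ext (by ring) (Prod.ext (by ring)
          (Prod.ext (by ring) (by ring))))
      · rintro ⟨m, γ, τ, s, s'⟩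
        simp only [Equiv.coe_fn_mk]
        exact congrArg₂ (· * ·) rfl (app3 H (by ring) (by ring) (by ring))
    rw [reindex]
    simp only [Fintype.sum_prod_type]
  rw [NP, SP]
  have assemble : ∀ x y t : K,
      (∑ d : K, H (x, y, t) * H (x, y + d, t + x * d))
        + (∑ d : K, ∑ m : K, H (x, y, t) * H (x + d, y + m * d, t + x * (m * d) - y * d))
      = H (x, y, t) * Uf H (x, y, t) := by
    intro x y t
    rw [Uf]
    simp only [← Finset.mul_sum]
    ring
  have final : (∑ x : K, ∑ y : K, ∑ t : K, ∑ d : K, H (x, y, t) * H (x, y + d, t + x * d))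
        + (∑ x : K, ∑ y : K, ∑ t : K, ∑ d : K, ∑ m : K,
            H (x, y, t) * H (x + d, y + m * d, t + x * (m * d) - y * d))
      = ∑ p : K × K × K, H p * Uf H p := by
    rw [← Finset.sum_add_distrib]
    simp only [Fintype.sum_prod_type]
    refine Finset.sum_congr rfl fun x _ => ?_
    rw [← Finset.sum_add_distrib]
    refine Finset.sum_congr rfl fun y _ => ?_
    rw [← Finset.sum_add_distrib]
    refine Finset.sum_congr rfl fun t _ => assemble x y t
  rw [← final]

/-- counting: each point lies on `q+1` of the `(q+1)q` special "planes". -/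
private lemma planes_count (g : K × K → ℝ) :
    (∑ ω : Option K × K, ∑ s : K, g ((lineRd ω 0 s).1, (lineRd ω 0 s).2.1))
      = ((Fintype.card K : ℝ) + 1) * ∑ v : K × K, g v := by
  classical
  rw [Fintype.sum_prod_type, Fintype.sum_option]
  have hnone : (∑ γ : K, ∑ s : K,
      g ((lineRd ((none : Option K), γ) 0 s).1, (lineRd ((none : Option K), γ) 0 s).2.1))
      = ∑ v : K × K, g v := by
    rw [Fintype.sum_prod_type]
    rfl
  have hsome : ∀ m : K, (∑ γ : K, ∑ s : K,
      g ((lineRd (some m, γ) 0 s).1, (lineRd (some m, γ) 0 s).2.1))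
      = ∑ v : K × K, g v := by
    intro m
    rw [Finset.sum_comm, Fintype.sum_prod_type]
    refine Finset.sum_congr rfl fun s _ => ?_
    exact Fintype.sum_equiv (Equiv.subLeft (m * s)) _ _ fun γ => rfl
  rw [hnone, Finset.sum_congr rfl fun m _ => hsome m]
  simp [Finset.sum_const, card_univ, nsmul_eq_mul]
  ring

end Aux

/-- sharp `ℓ²` bound for the refined-direction maximal operator.
For every `F : H₁(F_q) → ℂ`,
`‖M^rd F‖_{ℓ²(D₁)} ≤ 5 · q^{1/2} · ‖F‖_{ℓ²(H₁(F_q))}`. -/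
theorem stmt_12 {K : Type*} [Field K] [Fintype K] (Fc : K × K × K → ℂ) :
    lpNormR 2 (Mrd Fc) ≤
      5 * (Fintype.card K : ℝ) ^ ((1 : ℝ) / 2) * lpNormC 2 Fc := by
  classical
  set qR : ℝ := (Fintype.card K : ℝ) with hqR
  have hq1 : (1:ℝ) ≤ qR := by
    rw [hqR]; exact_mod_cast Fintype.card_pos
  have hq0 : (0:ℝ) < qR := lt_of_lt_of_le one_pos hq1
  set G : K × K × K → ℝ := fun p => ‖Fc p‖ with hG
  have hGnn : ∀ p, 0 ≤ G p := fun p => by rw [hG]; exact norm_nonneg _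
  set N : ℝ := ∑ p : K × K × K, G p ^ 2 with hN
  have hNnn : 0 ≤ N := Finset.sum_nonneg fun p _ => sq_nonneg _
  set g0 : K × K → ℝ := fun v => (∑ c : K, G (v.1, v.2, c)) / qR with hg0
  have hg0nn : ∀ v, 0 ≤ g0 v := fun v => by
    rw [hg0]
    exact div_nonneg (Finset.sum_nonneg fun c _ => hGnn _) hq0.le
  set H : K × K × K → ℝ := fun p => G p - g0 (p.1, p.2.1) with hH
  have hHval : ∀ x y t : K, H (x, y, t) = G (x, y, t) - g0 (x, y) := fun x y t => rfl
  have hg0val : ∀ x y : K, g0 (x, y) = (∑ c : K, G (x, y, c)) / qR := fun x y => rfl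
  have hfib : ∀ x y : K, ∑ t : K, H (x, y, t) = 0 := by
    intro x y
    rw [Finset.sum_congr rfl fun t _ => hHval x y t, Finset.sum_sub_distrib,
      Finset.sum_const, card_univ, nsmul_eq_mul, hg0val]
    field_simp
    rw [← hqR]; ring
  -- the mean part of line sums is independent of τ
  set A : Option K × K → ℝ :=
    fun ω => ∑ s : K, g0 ((lineRd ω 0 s).1, (lineRd ω 0 s).2.1) with hA
  have hAnn : ∀ ω, 0 ≤ A ω := fun ω => Finset.sum_nonneg fun s _ => hg0nn _
  have prline : ∀ (ω : Option K × K) (τ s : K),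
      ((lineRd ω τ s).1, (lineRd ω τ s).2.1) = ((lineRd ω 0 s).1, (lineRd ω 0 s).2.1) := by
    rintro ⟨_ | m, γ⟩ τ s <;> rfl
  have Lsplit : ∀ (ω : Option K × K) (τ : K),
      (∑ s : K, G (lineRd ω τ s)) = A ω + ∑ s : K, H (lineRd ω τ s) := by
    intro ω τ
    rw [hA, ← Finset.sum_add_distrib]
    refine Finset.sum_congr rfl fun s _ => ?_
    have h1 : H (lineRd ω τ s)
        = G (lineRd ω τ s) - g0 ((lineRd ω τ s).1, (lineRd ω τ s).2.1) := rfl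
    rw [h1, prline ω τ s]
    ring
  set Bq : Option K × K → ℝ :=
    fun ω => ∑ τ : K, (∑ s : K, H (lineRd ω τ s)) ^ 2 with hBq
  have hBqnn : ∀ ω, 0 ≤ Bq ω := fun ω => Finset.sum_nonneg fun τ _ => sq_nonneg _
  have hMrd_le : ∀ ω, Mrd Fc ω ≤ A ω + Real.sqrt (Bq ω) := by
    intro ω
    have hM : Mrd Fc ω = Finset.univ.sup' ⟨(0 : K), Finset.mem_univ _⟩
        (fun τ => ∑ s : K, G (lineRd ω τ s)) := rfl
    rw [hM]
    refine Finset.sup'_le _ _ fun τ _ => ?_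
    rw [Lsplit ω τ]
    have h2 : (∑ s : K, H (lineRd ω τ s)) ^ 2 ≤ Bq ω := by
      rw [hBq]
      exact Finset.single_le_sum (f := fun τ' => (∑ s : K, H (lineRd ω τ' s)) ^ 2)
        (fun τ' _ => sq_nonneg _) (Finset.mem_univ τ)
    have h3 : (∑ s : K, H (lineRd ω τ s)) ≤ Real.sqrt (Bq ω) := by
      calc (∑ s : K, H (lineRd ω τ s)) ≤ |∑ s : K, H (lineRd ω τ s)| := le_abs_self _
        _ = Real.sqrt ((∑ s : K, H (lineRd ω τ s)) ^ 2) := (Real.sqrt_sq_eq_abs _).symm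
        _ ≤ Real.sqrt (Bq ω) := Real.sqrt_le_sqrt h2
    linarith
  have hMrdnn : ∀ ω, 0 ≤ Mrd Fc ω := by
    intro ω
    have h1 : (0:ℝ) ≤ ∑ s : K, ‖Fc (lineRd ω 0 s)‖ :=
      Finset.sum_nonneg fun s _ => norm_nonneg _
    exact le_trans h1 (Finset.le_sup'
      (fun τ => ∑ s : K, ‖Fc (lineRd ω τ s)‖) (Finset.mem_univ (0:K)))
  -- bound on the mean part
  have hApart : ∑ ω : Option K × K, A ω ^ 2 ≤ (qR + 1) * N := by
    have hCS : ∀ ω, A ω ^ 2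
        ≤ qR * ∑ s : K, g0 ((lineRd ω 0 s).1, (lineRd ω 0 s).2.1) ^ 2 := by
      intro ω
      have h := Finset.sum_mul_sq_le_sq_mul_sq Finset.univ (fun _ : K => (1:ℝ))
        (fun s => g0 ((lineRd ω 0 s).1, (lineRd ω 0 s).2.1))
      simp only [one_mul, one_pow, Finset.sum_const, card_univ, nsmul_eq_mul,
        mul_one] at h
      rw [hA, hqR]
      exact h
    have hv : ∑ v : K × K, g0 v ^ 2 ≤ N / qR := by
      have hCSv : ∀ v : K × K, g0 v ^ 2 ≤ (∑ c : K, G (v.1, v.2, c) ^ 2) / qR := by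
        intro v
        have h := Finset.sum_mul_sq_le_sq_mul_sq Finset.univ (fun _ : K => (1:ℝ))
          (fun c => G (v.1, v.2, c))
        simp only [one_mul, one_pow, Finset.sum_const, card_univ, nsmul_eq_mul,
          mul_one] at h
        have hg : g0 v = (∑ c : K, G (v.1, v.2, c)) / qR := rfl
        rw [hg, div_pow, div_le_div_iff₀ (by positivity) hq0]
        rw [← hqR] at h
        nlinarith [h, hq0]
      calc ∑ v : K × K, g0 v ^ 2 ≤ ∑ v : K × K, (∑ c : K, G (v.1, v.2, c) ^ 2) / qR :=
            Finset.sum_le_sum fun v _ => hCSv v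
        _ = (∑ v : K × K, ∑ c : K, G (v.1, v.2, c) ^ 2) / qR := by
            rw [Finset.sum_div]
        _ = N / qR := by
            congr 1
            rw [hN]
            simp [Fintype.sum_prod_type]
    calc ∑ ω : Option K × K, A ω ^ 2
        ≤ ∑ ω : Option K × K, qR * ∑ s : K,
            g0 ((lineRd ω 0 s).1, (lineRd ω 0 s).2.1) ^ 2 :=
          Finset.sum_le_sum fun ω _ => hCS ω
      _ = qR * ((qR + 1) * ∑ v : K × K, g0 v ^ 2) := by
          rw [← Finset.mul_sum, planes_count (fun v => g0 v ^ 2), hqR]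
      _ ≤ qR * ((qR + 1) * (N / qR)) := by
          have h1 : (0:ℝ) ≤ qR * (qR + 1) := by nlinarith
          nlinarith [hv, h1, hq0]
      _ = (qR + 1) * N := by field_simp
  -- bound on the fluctuation part
  have hHsq : ∑ p : K × K × K, H p ^ 2 ≤ N := by
    have key : ∀ x y : K, (∑ t : K, H (x, y, t) ^ 2) ≤ ∑ t : K, G (x, y, t) ^ 2 := by
      intro x y
      have hsum : ∑ t : K, G (x, y, t) = qR * g0 (x, y) := by
        rw [hg0val]; field_simp
      have expand : (∑ t : K, H (x, y, t) ^ 2)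
          = (∑ t : K, G (x, y, t) ^ 2) - qR * g0 (x, y) ^ 2 := by
        have h1 : ∀ t : K, H (x, y, t) ^ 2
            = (G (x, y, t) ^ 2 - 2 * g0 (x, y) * G (x, y, t)) + g0 (x, y) ^ 2 := by
          intro t; rw [hHval]; ring
        rw [Finset.sum_congr rfl fun t _ => h1 t, Finset.sum_add_distrib,
          Finset.sum_sub_distrib, ← Finset.mul_sum, hsum, Finset.sum_const,
          card_univ, nsmul_eq_mul, ← hqR]
        ring
      rw [expand]
      nlinarith [sq_nonneg (g0 (x, y)), hq0]
    have h2 : ∑ p : K × K × K, H p ^ 2 = ∑ x : K, ∑ y : K, ∑ t : K, H (x, y, t) ^ 2 := by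
      simp [Fintype.sum_prod_type]
    have h3 : N = ∑ x : K, ∑ y : K, ∑ t : K, G (x, y, t) ^ 2 := by
      rw [hN]; simp [Fintype.sum_prod_type]
    rw [h2, h3]
    exact Finset.sum_le_sum fun x _ => Finset.sum_le_sum fun y _ => key x y
  have hBpart : ∑ ω : Option K × K, Bq ω ≤ 2 * qR * N := by
    have hSl : ∑ ω : Option K × K, Bq ω
        = qR * (∑ p : K × K × K, H p ^ 2) + ∑ p : K × K × K, H p * Tf H p := by
      rw [hBq]
      rw [Sline_eq H]
      rw [Finset.sum_congr rfl fun p _ => by rw [Uf_eq H p, ← hqR]]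
      rw [Finset.sum_congr rfl (fun p _ => (by ring :
        H p * (qR * H p + Tf H p) = qR * H p ^ 2 + H p * Tf H p)),
        Finset.sum_add_distrib, ← Finset.mul_sum]
    have hTn : ∑ p : K × K × K, Tf H p ^ 2 = qR ^ 2 * ∑ p : K × K × K, H p ^ 2 := by
      rw [hqR]; exact Tf_norm H hfib
    have hHsqnn : (0:ℝ) ≤ ∑ p : K × K × K, H p ^ 2 :=
      Finset.sum_nonneg fun p _ => sq_nonneg _
    have hCS3 : ∑ p : K × K × K, H p * Tf H p ≤ qR * ∑ p : K × K × K, H p ^ 2 := by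
      have h2 := Finset.sum_mul_sq_le_sq_mul_sq Finset.univ H (Tf H)
      rw [hTn] at h2
      have hqM : (0:ℝ) ≤ qR * ∑ p : K × K × K, H p ^ 2 := mul_nonneg hq0.le hHsqnn
      have h2' : (∑ p : K × K × K, H p * Tf H p) ^ 2
          ≤ (qR * ∑ p : K × K × K, H p ^ 2) ^ 2 := by
        calc (∑ p : K × K × K, H p * Tf H p) ^ 2
            ≤ (∑ p : K × K × K, H p ^ 2) * (qR ^ 2 * ∑ p : K × K × K, H p ^ 2) := h2
          _ = (qR * ∑ p : K × K × K, H p ^ 2) ^ 2 := by ring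
      refine le_trans (le_abs_self _) ?_
      rw [← Real.sqrt_sq_eq_abs, ← Real.sqrt_sq hqM]
      exact Real.sqrt_le_sqrt h2'
    calc ∑ ω : Option K × K, Bq ω
        = qR * (∑ p : K × K × K, H p ^ 2) + ∑ p : K × K × K, H p * Tf H p := hSl
      _ ≤ qR * (∑ p : K × K × K, H p ^ 2) + qR * ∑ p : K × K × K, H p ^ 2 := by
          linarith
      _ = 2 * qR * (∑ p : K × K × K, H p ^ 2) := by ring
      _ ≤ 2 * qR * N := by nlinarith [hHsq, hq0]
  -- total square-sum bound
  have hSum : ∑ ω : Option K × K, Mrd Fc ω ^ 2 ≤ 25 * qR * N := by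
    have h1 : ∀ ω : Option K × K, Mrd Fc ω ^ 2 ≤ 2 * A ω ^ 2 + 2 * Bq ω := by
      intro ω
      have h2 := hMrd_le ω
      have h3 := hMrdnn ω
      have h4 : Real.sqrt (Bq ω) ^ 2 = Bq ω := Real.sq_sqrt (hBqnn ω)
      nlinarith [Real.sqrt_nonneg (Bq ω), hAnn ω,
        sq_nonneg (A ω - Real.sqrt (Bq ω))]
    calc ∑ ω : Option K × K, Mrd Fc ω ^ 2
        ≤ ∑ ω : Option K × K, (2 * A ω ^ 2 + 2 * Bq ω) :=
          Finset.sum_le_sum fun ω _ => h1 ω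
      _ = 2 * (∑ ω : Option K × K, A ω ^ 2) + 2 * (∑ ω : Option K × K, Bq ω) := by
          rw [Finset.sum_add_distrib, ← Finset.mul_sum, ← Finset.mul_sum]
      _ ≤ 2 * ((qR + 1) * N) + 2 * (2 * qR * N) := by linarith
      _ ≤ 25 * qR * N := by nlinarith [hq1, hNnn]
  -- conversion to `ℓ^2` norms
  rw [lpNormR, lpNormC]
  have habs : ∀ ω : Option K × K, |Mrd Fc ω| ^ (2:ℝ) = Mrd Fc ω ^ 2 := by
    intro ω
    rw [abs_of_nonneg (hMrdnn ω), show ((2:ℝ)) = ((2:ℕ):ℝ) by norm_num,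
      Real.rpow_natCast]
  have habs2 : ∀ p : K × K × K, ‖Fc p‖ ^ (2:ℝ) = G p ^ 2 := by
    intro p
    rw [show ((2:ℝ)) = ((2:ℕ):ℝ) by norm_num, Real.rpow_natCast, hG]
  rw [Finset.sum_congr rfl fun ω _ => habs ω,
    Finset.sum_congr rfl fun p _ => habs2 p, ← hN]
  have h5 : (25 * qR * N) ^ ((1:ℝ)/2) = 5 * qR ^ ((1:ℝ)/2) * N ^ ((1:ℝ)/2) := by
    rw [Real.mul_rpow (by positivity) hNnn, Real.mul_rpow (by norm_num) hq0.le]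
    congr 1
    rw [show (25:ℝ) = (5:ℝ)^(2:ℕ) by norm_num, ← Real.rpow_natCast (5:ℝ) 2,
      ← Real.rpow_mul (by norm_num)]
    norm_num
  calc (∑ ω : Option K × K, Mrd Fc ω ^ 2) ^ ((1:ℝ)/2)
      ≤ (25 * qR * N) ^ ((1:ℝ)/2) :=
        Real.rpow_le_rpow (Finset.sum_nonneg fun ω _ => sq_nonneg _) hSum (by norm_num)
    _ = 5 * qR ^ ((1:ℝ)/2) * N ^ ((1:ℝ)/2) := h5
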